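/- Let w(x) = log²(2+|x|) for x ∈ ℝ². There is a constant C such that for every t > 2, every measurable f : ℝ² → ℂ with ∫_{ℝ²} w(y)|f(y)| dy < ∞, and every x ∈ ℝ², the free two-dimensional Schrödinger evolution satisfies |(1/(4πit)) ∫_{ℝ²} (e^{−i|x−y|²/(4t)} − 1) f(y) dy| ≤ C · w(x) · (t (log t)²)^{−1} · ∫_{ℝ²} w(y)|f(y)| dy. Equivalently, ‖w^{−1}(e^{−itΔ}f − t^{−1}ψ⟨f,ψ⟩)‖_{L^∞(ℝ²)} ≲ (t log²t)^{−1} ‖wf‖_{L¹(ℝ²)} with ψ ≡ const, where e^{−itΔ}f(x) = (4πit)^{−1} ∫_{ℝ²} e^{−i|x−y|²/(4t)} f(y) dy. -/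

import Mathlib

open MeasureTheory Real Complex

noncomputable section

abbrev Plane : Type := EuclideanSpace ℝ (Fin 2)

def wt (x : Plane) : ℝ := (Real.log (2 + ‖x‖)) ^ 2

lemma key {t r : ℝ} (ht : 2 < t) (hr : 0 ≤ r) :
    min 2 (r^2/(2*t)) * (Real.log t)^2 ≤ 64 * (Real.log (2 + r/2))^2 := by
  have ht0 : 0 < t := by linarith
  have hL : 0 < Real.log t := Real.log_pos (by linarith)
  have hM : 0 < Real.log (2 + r/2) := Real.log_pos (by linarith)
  have hA : 16 * r^2 ≤ (2 + r/2)^4 := by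
    nlinarith [mul_nonneg (sq_nonneg (r/2 - 2)) (show (0:ℝ) ≤ (r/2)^2 + 12*(r/2) + 4 by positivity)]
  rcases le_or_gt t (r^2) with h1 | h1
  · -- r² ≥ t : use min ≤ 2 and  L ≤ 4M
    have h4 : t ≤ (2 + r/2)^4 := by nlinarith
    have hLM : Real.log t ≤ 4 * Real.log (2 + r/2) := by
      have := Real.log_le_log ht0 h4
      rwa [Real.log_pow, show ((4:ℕ):ℝ) = 4 by norm_num] at this
    have hmin : min 2 (r^2/(2*t)) ≤ 2 := min_le_left _ _
    nlinarith [sq_nonneg (Real.log t), sq_nonneg (Real.log (2+r/2)), hL.le, hM.le]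
  · rcases le_or_gt (r^4) t with h2 | h2
    · -- r⁴ ≤ t : LHS ≤ 8 ≤ 64 log²2
      set q := Real.sqrt (Real.sqrt t) with hq
      have hs : Real.sqrt t > 0 := Real.sqrt_pos.mpr ht0
      have hq0 : 0 < q := Real.sqrt_pos.mpr hs
      have hq2 : q^2 = Real.sqrt t := Real.sq_sqrt hs.le
      have hq4 : q^4 = t := by
        have : (q^2)^2 = t := by rw [hq2]; exact Real.sq_sqrt ht0.le
        nlinarith [this]
      have hr2 : r^2 ≤ Real.sqrt t := by
        have : Real.sqrt (r^4) ≤ Real.sqrt t := Real.sqrt_le_sqrt h2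
        rwa [show r^4 = (r^2)^2 by ring, Real.sqrt_sq (sq_nonneg r)] at this
      have hlogt : Real.log t ≤ 4 * q := by
        have h1 : Real.log t = 4 * Real.log q := by
          rw [← hq4, Real.log_pow]; norm_num
        have h2 : Real.log q ≤ q - 1 := Real.log_le_sub_one_of_pos hq0
        linarith
      have hL2 : (Real.log t)^2 ≤ 16 * Real.sqrt t := by
        nlinarith [hL.le, hq0.le]
      have hmin : min 2 (r^2/(2*t)) ≤ r^2/(2*t) := min_le_right _ _
      have hmin0 : 0 ≤ min 2 (r^2/(2*t)) := le_min (by norm_num) (by positivity)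
      have hLHS : min 2 (r^2/(2*t)) * (Real.log t)^2 ≤ 8 := by
        have h3 : min 2 (r^2/(2*t)) * (Real.log t)^2 ≤ (r^2/(2*t)) * (16 * Real.sqrt t) := by
          apply mul_le_mul hmin hL2 (sq_nonneg _) (by positivity)
        have h4 : (r^2/(2*t)) * (16 * Real.sqrt t) ≤ 8 := by
          rw [div_mul_eq_mul_div, div_le_iff₀ (by positivity)]
          have hst : Real.sqrt t * Real.sqrt t = t := Real.mul_self_sqrt ht0.le
          nlinarith [hr2, hs.le]
        linarith
      have hlog2 : (0.6931471803 : ℝ) < Real.log 2 := Real.log_two_gt_d9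
      have hM2 : Real.log 2 ≤ Real.log (2 + r/2) := Real.log_le_log (by norm_num) (by linarith)
      nlinarith [hM.le]
    · -- r² < t < r⁴ : L ≤ 8M and min ≤ 1/2
      have h8 : t ≤ (2 + r/2)^8 := by
        have h256 : 256 * r^4 ≤ (2 + r/2)^8 := by
          have := pow_le_pow_left₀ (by positivity : (0:ℝ) ≤ 16 * r^2) hA 2
          calc 256 * r^4 = (16 * r^2)^2 := by ring
            _ ≤ ((2 + r/2)^4)^2 := this
            _ = (2 + r/2)^8 := by ring
        nlinarith [pow_nonneg hr 4]
      have hLM : Real.log t ≤ 8 * Real.log (2 + r/2) := by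
        have := Real.log_le_log ht0 h8
        rwa [Real.log_pow, show ((8:ℕ):ℝ) = 8 by norm_num] at this
      have hmin : min 2 (r^2/(2*t)) ≤ 1/2 := by
        refine le_trans (min_le_right _ _) ?_
        rw [div_le_iff₀ (by positivity)]; nlinarith
      nlinarith [sq_nonneg (Real.log t), hL.le, hM.le]

lemma wt_mul_wt (x y : Plane) :
    (Real.log 2)^2 * (Real.log (2 + ‖x - y‖/2))^2 ≤ wt x * wt y := by
  have hr : ‖x - y‖ ≤ ‖x‖ + ‖y‖ := norm_sub_le x y
  have hr0 : 0 ≤ ‖x - y‖ := norm_nonneg _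
  have hlog2 : 0 < Real.log 2 := Real.log_pos (by norm_num)
  have base : ∀ z : Plane, (Real.log 2)^2 ≤ wt z := by
    intro z
    have h0 : 0 ≤ ‖z‖ := norm_nonneg z
    have : Real.log 2 ≤ Real.log (2 + ‖z‖) := Real.log_le_log (by norm_num) (by linarith)
    exact pow_le_pow_left₀ hlog2.le this 2
  have hmono : ∀ z : Plane, ‖x - y‖/2 ≤ ‖z‖ → (Real.log (2 + ‖x - y‖/2))^2 ≤ wt z := by
    intro z hz
    have : Real.log (2 + ‖x - y‖/2) ≤ Real.log (2 + ‖z‖) :=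
      Real.log_le_log (by positivity) (by linarith)
    exact pow_le_pow_left₀ (Real.log_nonneg (by linarith)) this 2
  rcases le_or_gt (‖x - y‖/2) ‖x‖ with h | h
  · rw [mul_comm ((Real.log 2)^2)]
    exact mul_le_mul (hmono x h) (base y) (sq_nonneg _) (le_trans (sq_nonneg _) (hmono x h))
  · have hy : ‖x - y‖/2 ≤ ‖y‖ := by linarith
    exact mul_le_mul (base x) (hmono y hy) (sq_nonneg _) (le_trans (sq_nonneg _) (base x))

lemma exp_bound {t r : ℝ} (ht : 0 < t) (hr : 0 ≤ r) :
    ‖Complex.exp (-Complex.I * (r:ℂ)^2 / (4*(t:ℂ))) - 1‖ ≤ min 2 (r^2/(2*t)) := by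
  have htc : (t:ℂ) ≠ 0 := by exact_mod_cast ht.ne'
  have hz : -Complex.I * (r:ℂ)^2 / (4*(t:ℂ)) = ((-(r^2/(4*t)) : ℝ):ℂ) * Complex.I := by
    push_cast; field_simp
  rw [hz]
  have habs : ‖(((-(r^2/(4*t)) : ℝ):ℂ) * Complex.I)‖ = r^2/(4*t) := by
    rw [norm_mul, Complex.norm_I, Complex.norm_real, Real.norm_eq_abs, mul_one,
      abs_of_nonpos (neg_nonpos.mpr (by positivity)), neg_neg]
  rcases le_or_gt (r^2/(2*t)) 2 with h | h
  · rw [min_eq_right h]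
    have h4 : r^2 ≤ 4*t := by
      rw [div_le_iff₀ (by positivity)] at h; linarith
    have h1 : ‖(((-(r^2/(4*t)) : ℝ):ℂ) * Complex.I)‖ ≤ 1 := by
      rw [habs, div_le_one (by positivity)]; linarith
    refine (Complex.norm_exp_sub_one_le h1).trans ?_
    rw [habs]
    have : 2 * (r^2/(4*t)) = r^2/(2*t) := by field_simp; ring
    exact this.le
  · rw [min_eq_left h.le]
    calc ‖Complex.exp (((-(r^2/(4*t)) : ℝ):ℂ) * Complex.I) - 1‖
        ≤ ‖Complex.exp (((-(r^2/(4*t)) : ℝ):ℂ) * Complex.I)‖ + ‖(1:ℂ)‖ := norm_sub_le _ _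
      _ = 2 := by
          rw [Complex.norm_exp_ofReal_mul_I]; norm_num

lemma scale_ineq {p t L W G : ℝ} (hp : 1 ≤ p) (ht : 0 < t) (hL : 0 < L) (hW : 0 ≤ W) (hG : 0 ≤ G) :
    (p*t)⁻¹ * (W / L * G) ≤ W * (t*L)⁻¹ * G := by
  have hX : (0:ℝ) ≤ t⁻¹ * (W / L * G) := by positivity
  have h1 : p⁻¹ ≤ 1 := inv_le_one_of_one_le₀ hp
  have e : (p*t)⁻¹ * (W / L * G) = p⁻¹ * (t⁻¹ * (W / L * G)) := by
    rw [mul_inv]; ring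
  have e2 : W * (t*L)⁻¹ * G = t⁻¹ * (W / L * G) := by
    rw [mul_inv]; field_simp
  rw [e, e2]
  calc p⁻¹ * (t⁻¹ * (W / L * G)) ≤ 1 * (t⁻¹ * (W / L * G)) :=
        mul_le_mul_of_nonneg_right h1 hX
    _ = t⁻¹ * (W / L * G) := one_mul _
theorem free_weighted_dispersive_estimate :
    ∃ C : ℝ, 0 < C ∧ ∀ t : ℝ, 2 < t →
      ∀ f : Plane → ℂ, Measurable f →
        Integrable (fun y : Plane => wt y * ‖f y‖) →
        ∀ x : Plane,
          ‖(1 / (4 * Real.pi * Complex.I * (t : ℂ))) *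
              ∫ y : Plane,
                (Complex.exp (-Complex.I * (‖x - y‖ : ℂ) ^ 2 / (4 * (t : ℂ))) - 1) * f y‖ ≤
            C * wt x * (t * (Real.log t) ^ 2)⁻¹ * ∫ y : Plane, wt y * ‖f y‖ := by
  have hlog2 : 0 < Real.log 2 := Real.log_pos one_lt_two
  refine ⟨64/(Real.log 2)^2, by positivity, ?_⟩
  intro t ht f hf hint x
  have ht0 : 0 < t := by linarith
  have hL : 0 < Real.log t := Real.log_pos (by linarith)
  set A : ℝ := 64/(Real.log 2)^2 with hA
  have hA0 : 0 < A := by positivity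
  set G : ℝ := ∫ y : Plane, wt y * ‖f y‖ with hG
  have hG0 : 0 ≤ G :=
    integral_nonneg fun y => mul_nonneg (sq_nonneg _) (norm_nonneg _)
  have hwtx : 0 ≤ wt x := sq_nonneg _
  -- pointwise bound
  have hpt : ∀ y : Plane,
      ‖(Complex.exp (-Complex.I * (‖x - y‖ : ℂ) ^ 2 / (4 * (t : ℂ))) - 1) * f y‖
        ≤ (A * wt x / (Real.log t)^2) * (wt y * ‖f y‖) := by
    intro y
    rw [norm_mul]
    have h1 := exp_bound ht0 (norm_nonneg (x - y))
    have h2 := key ht (norm_nonneg (x - y))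
    have h3 := wt_mul_wt x y
    have hb : ‖Complex.exp (-Complex.I * (‖x - y‖ : ℂ) ^ 2 / (4 * (t : ℂ))) - 1‖
        ≤ A * (wt x * wt y) / (Real.log t)^2 := by
      refine h1.trans ?_
      rw [le_div_iff₀ (by positivity)]
      calc min 2 (‖x - y‖^2/(2*t)) * (Real.log t)^2
          ≤ 64 * (Real.log (2 + ‖x - y‖/2))^2 := h2
        _ ≤ A * (wt x * wt y) := by
            rw [hA, div_mul_eq_mul_div, le_div_iff₀ (by positivity)]
            nlinarith [h3]
    calc ‖Complex.exp (-Complex.I * (‖x - y‖ : ℂ) ^ 2 / (4 * (t : ℂ))) - 1‖ * ‖f y‖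
        ≤ (A * (wt x * wt y) / (Real.log t)^2) * ‖f y‖ :=
          mul_le_mul_of_nonneg_right hb (norm_nonneg _)
      _ = (A * wt x / (Real.log t)^2) * (wt y * ‖f y‖) := by ring
  have hbound :
      ‖∫ y : Plane, (Complex.exp (-Complex.I * (‖x - y‖ : ℂ) ^ 2 / (4 * (t : ℂ))) - 1) * f y‖
        ≤ (A * wt x / (Real.log t)^2) * G := by
    refine (norm_integral_le_integral_norm _).trans ?_
    have hmono := integral_mono_of_nonneg
      (Filter.Eventually.of_forall fun y => norm_nonneg _)
      (hint.const_mul (A * wt x / (Real.log t)^2))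
      (Filter.Eventually.of_forall hpt)
    rwa [integral_const_mul] at hmono
  have hcnorm : ‖(1 / (4 * (Real.pi:ℂ) * Complex.I * (t:ℂ)))‖ = (4*Real.pi*t)⁻¹ := by
    rw [norm_div, norm_one]
    have : ‖(4 * (Real.pi:ℂ) * Complex.I * (t:ℂ))‖ = 4*Real.pi*t := by
      simp [map_mul, Complex.norm_real, Complex.norm_I,
        abs_of_pos Real.pi_pos, abs_of_pos ht0]
    rw [this, one_div]
  rw [norm_mul, hcnorm]
  have hπ : 1 ≤ 4*Real.pi := by nlinarith [Real.pi_gt_three]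
  refine le_trans (mul_le_mul_of_nonneg_left hbound (by positivity)) ?_
  exact scale_ineq hπ ht0 (pow_pos hL 2) (by positivity) hG0
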